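/- If q is not a root of unity and s ≠ ±i q^{m+1/2} for all integers m, then the eigenvalues i(sq^m - s^{-1}q^{-m})/(q-q^{-1}) of R_{rs}(I), for m ∈ Z, are pairwise distinct. -/

import Mathlib

noncomputable section

/-- The basis vector |m⟩, m ∈ ℤ. -/
def e (m : ℤ) : ℤ →₀ ℂ := Finsupp.single m 1

/-- A linear operator on the space with basis {|m⟩ : m ∈ ℤ}, given by its values on
the basis vectors. -/
def op (f : ℤ → (ℤ →₀ ℂ)) : (ℤ →₀ ℂ) →ₗ[ℂ] (ℤ →₀ ℂ) :=
  Finsupp.lift _ _ _ f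

variable (q sq r s : ℂ)

/-- R(I)|m⟩ = i((sqᵐ - s⁻¹q⁻ᵐ)/(q-q⁻¹))|m⟩. -/
def RI : (ℤ →₀ ℂ) →ₗ[ℂ] (ℤ →₀ ℂ) :=
  op fun m => (Complex.I * (s * q ^ m - s⁻¹ * q ^ (-m)) / (q - q⁻¹)) • e m

/-- R(T2)|m⟩ = (r/(sqᵐ + s⁻¹q⁻ᵐ))(|m+1⟩ + |m-1⟩). -/
def RT2 : (ℤ →₀ ℂ) →ₗ[ℂ] (ℤ →₀ ℂ) :=
  op fun m => (r / (s * q ^ m + s⁻¹ * q ^ (-m))) • (e (m + 1) + e (m - 1))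

/-- R(T1)|m⟩ = (i q^{1/2} r/(sqᵐ + s⁻¹q⁻ᵐ))(sqᵐ|m+1⟩ - s⁻¹q⁻ᵐ|m-1⟩),
where sq = q^{1/2}. -/
def RT1 : (ℤ →₀ ℂ) →ₗ[ℂ] (ℤ →₀ ℂ) :=
  op fun m => (Complex.I * sq * r / (s * q ^ m + s⁻¹ * q ^ (-m))) •
    ((s * q ^ m) • e (m + 1) - (s⁻¹ * q ^ (-m)) • e (m - 1))

end


/-- If q is not a root of unity and s ≠ ±i q^{m+1/2} for all integers m,
then the eigenvalues i(sqᵐ - s⁻¹q⁻ᵐ)/(q-q⁻¹) of R_{rs}(I), m ∈ ℤ, are pairwise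
distinct. (The conditions s ≠ 0 and s ≠ ±i qⁿ are those required for R_{rs} to be
defined.) -/
theorem stmt8 (q sq s : ℂ) (hq : q ≠ 0) (hsq : sq ^ 2 = q)
    (hroot : ∀ n : ℕ, n ≠ 0 → q ^ n ≠ 1) (hs : s ≠ 0)
    (hsi : ∀ n : ℤ, s ≠ Complex.I * q ^ n ∧ s ≠ -(Complex.I * q ^ n))
    (hsi2 : ∀ n : ℤ, s ≠ Complex.I * q ^ n * sq ∧ s ≠ -(Complex.I * q ^ n * sq)) :
    ∀ m n : ℤ, m ≠ n →
      Complex.I * (s * q ^ m - s⁻¹ * q ^ (-m)) / (q - q⁻¹) ≠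
      Complex.I * (s * q ^ n - s⁻¹ * q ^ (-n)) / (q - q⁻¹) := by
  intro m n hmn heq
  have hq2 : q * q ≠ 1 := fun h => hroot 2 (by norm_num) (by rw [pow_two]; exact h)
  have hqq : q - q⁻¹ ≠ 0 := by
    intro h
    apply hq2
    have h' := sub_eq_zero.mp h
    field_simp at h'
    linear_combination h'
  have hA : q ^ m ≠ 0 := zpow_ne_zero _ hq
  have hB : q ^ n ≠ 0 := zpow_ne_zero _ hq
  have h2 := congrArg (· * (q - q⁻¹)) heq
  simp only [div_mul_cancel₀ _ hqq] at h2
  have h1 := mul_left_cancel₀ Complex.I_ne_zero h2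
  -- rewrite negatives
  rw [zpow_neg, zpow_neg] at h1
  have hkey : (q ^ m - q ^ n) * (s ^ 2 * (q ^ m * q ^ n) + 1) = 0 := by
    field_simp at h1
    have hkey0 : s * ((q ^ m - q ^ n) * (s ^ 2 * (q ^ m * q ^ n) + 1)) = 0 := by
      linear_combination s * h1
    rcases mul_eq_zero.mp hkey0 with h | h
    · exact absurd h hs
    · exact h
  have hAB : q ^ m ≠ q ^ n := by
    intro h
    rcases lt_or_gt_of_ne hmn with hlt | hlt
    · apply hroot (n - m).natAbs (by omega)
      have : q ^ (n - m) = 1 := by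
        rw [zpow_sub₀ hq, h, div_self hB]
      rw [← this, ← zpow_natCast]
      congr 1
      omega
    · apply hroot (m - n).natAbs (by omega)
      have : q ^ (m - n) = 1 := by
        rw [zpow_sub₀ hq, h, div_self hB]
      rw [← this, ← zpow_natCast]
      congr 1
      omega
  rcases mul_eq_zero.mp hkey with h | h
  · exact hAB (sub_eq_zero.mp h)
  · -- s ^ 2 = - q ^ (-(m+n))
    have hs2 : s ^ 2 = -q ^ (-(m + n)) := by
      rw [zpow_neg, zpow_add₀ hq]
      field_simp
      linear_combination h
    rcases Int.even_or_odd (-(m + n)) with ⟨j, hj⟩ | ⟨j, hj⟩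
    · have ht : (s - Complex.I * q ^ j) * (s + Complex.I * q ^ j) = 0 := by
        have hqj : q ^ (-(m+n)) = q ^ j * q ^ j := by rw [hj, zpow_add₀ hq]
        rw [hqj] at hs2
        linear_combination hs2 - (q ^ j * q ^ j) * Complex.I_sq
      rcases mul_eq_zero.mp ht with h' | h'
      · exact (hsi j).1 (sub_eq_zero.mp h')
      · exact (hsi j).2 (by linear_combination h')
    · have ht : (s - Complex.I * q ^ j * sq) * (s + Complex.I * q ^ j * sq) = 0 := by
        have hqj : q ^ (-(m+n)) = q ^ j * q ^ j * sq ^ 2 := by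
          rw [hsq, hj, two_mul, zpow_add₀ hq, zpow_add₀ hq, zpow_one]
        rw [hqj] at hs2
        linear_combination hs2 - (q ^ j * q ^ j * sq ^ 2) * Complex.I_sq
      rcases mul_eq_zero.mp ht with h' | h'
      · exact (hsi2 j).1 (sub_eq_zero.mp h')
      · exact (hsi2 j).2 (by linear_combination h')
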